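/- For every integer l ≥ 1, one has lim_{δ → 0+} leb(A_{lδ} \ A)/δ = (1 − b)·l and lim_{δ → ∞} leb(A_{lδ} \ A) = leb(A). -/

import Mathlib

open MeasureTheory Set Filter Topology

private lemma slice_volume {e : ℝ → ℝ} (he : Measurable e) (b : ℝ) {S : Set ℝ}
    (hS : MeasurableSet S) :
    volume {p : ℝ × ℝ | p.2 ∈ S ∧ b ≤ p.1 ∧ p.1 < e p.2} =
      ∫⁻ s in S, ENNReal.ofReal (e s - b) := by
  have hmeas : MeasurableSet {p : ℝ × ℝ | p.2 ∈ S ∧ b ≤ p.1 ∧ p.1 < e p.2} := by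
    refine (measurable_snd hS).inter (MeasurableSet.inter ?_ ?_)
    · exact measurableSet_le measurable_const measurable_fst
    · exact measurableSet_lt measurable_fst (he.comp measurable_snd)
  rw [Measure.volume_eq_prod ℝ ℝ, Measure.prod_apply_symm hmeas]
  have hslice : ∀ y : ℝ,
      volume ((fun x => (x, y)) ⁻¹' {p : ℝ × ℝ | p.2 ∈ S ∧ b ≤ p.1 ∧ p.1 < e p.2})
        = S.indicator (fun y => ENNReal.ofReal (e y - b)) y := by
    intro y
    by_cases hy : y ∈ S
    · have hpre : (fun x => (x, y)) ⁻¹' {p : ℝ × ℝ | p.2 ∈ S ∧ b ≤ p.1 ∧ p.1 < e p.2}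
          = Ico b (e y) := by
        ext x; simp [hy, mem_Ico]
      rw [hpre, Real.volume_Ico, indicator_of_mem hy]
    · have hpre : (fun x => (x, y)) ⁻¹' {p : ℝ × ℝ | p.2 ∈ S ∧ b ≤ p.1 ∧ p.1 < e p.2}
          = (∅ : Set ℝ) := by
        ext x; simp [hy]
      rw [hpre, measure_empty, indicator_of_notMem hy]
  simp_rw [hslice]
  rw [lintegral_indicator hS]

/-- For every integer `l ≥ 1`, `lim_{δ → 0+} leb(A_{lδ} \ A)/δ = (1 − b)·l`
and `lim_{δ → ∞} leb(A_{lδ} \ A) = leb(A)`. -/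
theorem trawl_increment_area_limits
    (b : ℝ) (hb : b ∈ Set.Icc (0:ℝ) 1)
    (d : ℝ → ℝ)
    (hd_cont : ContinuousOn d (Set.Iic 0))
    (hd_mono : MonotoneOn d (Set.Iic 0))
    (hd_range : ∀ s ≤ (0:ℝ), d s ∈ Set.Icc b 1)
    (hd0 : d 0 = 1)
    (hd_lim : Filter.Tendsto d Filter.atBot (nhds b))
    (hd_int : MeasureTheory.IntegrableOn (fun s => d s - b) (Set.Iic 0))
    (A : ℝ → Set (ℝ × ℝ))
    (hA : ∀ t, A t = {p : ℝ × ℝ | p.2 ≤ t ∧ b ≤ p.1 ∧ p.1 < d (p.2 - t)}) :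
    ∀ l : ℕ, 1 ≤ l →
      Filter.Tendsto (fun δ : ℝ => (volume (A ((l:ℝ)*δ) \ A 0)).toReal / δ)
        (nhdsWithin 0 (Set.Ioi 0)) (nhds ((1 - b) * l)) ∧
      Filter.Tendsto (fun δ : ℝ => volume (A ((l:ℝ)*δ) \ A 0))
        Filter.atTop (nhds (volume (A 0))) := by
  obtain ⟨hb0, hb1⟩ := hb
  set e : ℝ → ℝ := fun s => d (min s 0) with he_def
  have he_mono : Monotone e := fun x y hxy =>
    hd_mono (min_le_right x 0) (min_le_right y 0) (min_le_min hxy le_rfl)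
  have he_meas : Measurable e := he_mono.measurable
  have he_eq : ∀ s ≤ (0:ℝ), e s = d s := by
    intro s hs; simp only [he_def, min_eq_left hs]
  have he_range : ∀ s, e s ∈ Icc b 1 := fun s => hd_range _ (min_le_right s 0)
  set g : ℝ → ℝ := fun u => e u - b with hg_def
  have hg_nonneg : ∀ u, 0 ≤ g u := fun u => sub_nonneg.2 (he_range u).1
  have hg_le : ∀ u, g u ≤ 1 := by
    intro u; have h1 := (he_range u).2; simp only [hg_def]; linarith
  have hg_meas : Measurable g := he_meas.sub measurable_const
  have hg0 : g 0 = 1 - b := by simp [hg_def, he_def, hd0]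
  -- integrability helper
  have hg_intOn : ∀ (S : Set ℝ) (c : ℝ), IntegrableOn (fun s => g (s - c)) S volume →
      True := fun _ _ _ => trivial
  have hg_bdd : ∀ (c : ℝ) (S : Set ℝ), volume S < ⊤ →
      IntegrableOn (fun s => g (s - c)) S volume := by
    intro c S hS
    have : IsFiniteMeasure (volume.restrict S) :=
      ⟨by simpa [Measure.restrict_apply_univ] using hS⟩
    refine Integrable.mono' (integrable_const (1:ℝ))
      ((hg_meas.comp (measurable_id.sub measurable_const)).aestronglyMeasurable.restrict) ?_
    filter_upwards with u
    rw [Real.norm_eq_abs, abs_of_nonneg (hg_nonneg _)]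
    exact hg_le _
  have hg_int0 : IntegrableOn g (Iic 0) volume := by
    refine hd_int.congr_fun (fun s hs => ?_) measurableSet_Iic
    simp only [hg_def, he_eq s hs]
  -- continuity of g at 0
  have he_cont : ContinuousAt e 0 := by
    have hmin : ContinuousAt (fun s : ℝ => min s 0) 0 :=
      (continuous_id.min continuous_const).continuousAt
    have hd0' : ContinuousWithinAt d (Iic 0) ((fun s : ℝ => min s 0) 0) := by
      simpa using (hd_cont 0 (mem_Iic.2 le_rfl))
    have hcmp := ContinuousWithinAt.comp (f := fun s : ℝ => min s 0) (s := univ) hd0'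
      hmin.continuousWithinAt (fun x _ => mem_Iic.2 (min_le_right x 0))
    exact (by simpa [continuousWithinAt_univ] using hcmp : ContinuousAt (d ∘ fun s : ℝ => min s 0) 0)
  have hg_cont : ContinuousAt g 0 := he_cont.sub continuousAt_const
  -- K t := ∫ u in (-t)..0, g u
  set K : ℝ → ℝ := fun t => ∫ u in (-t)..(0:ℝ), g u with hK_def
  -- main volume formula
  have hvol : ∀ t : ℝ, 0 ≤ t → volume (A t \ A 0) = ENNReal.ofReal (K t) := by
    intro t ht
    have hset : A t \ A 0 =
        {p : ℝ × ℝ | p.2 ∈ Ioc 0 t ∧ b ≤ p.1 ∧ p.1 < (fun s => e (s - t)) p.2} := by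
      rw [hA t, hA 0]
      ext ⟨x, s⟩
      simp only [mem_diff, mem_setOf_eq, mem_Ioc, sub_zero]
      constructor
      · rintro ⟨⟨hst, hbx, hxd⟩, hnot⟩
        have hs_pos : 0 < s := by
          by_contra h
          push_neg at h
          refine hnot ⟨h, hbx, lt_of_lt_of_le hxd ?_⟩
          exact hd_mono (by linarith : s - t ≤ (0:ℝ)) h (by linarith)
        exact ⟨⟨hs_pos, hst⟩, hbx, by rwa [he_eq _ (by linarith : s - t ≤ 0)]⟩
      · rintro ⟨⟨hs_pos, hst⟩, hbx, hxe⟩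
        rw [he_eq _ (by linarith : s - t ≤ 0)] at hxe
        exact ⟨⟨hst, hbx, hxe⟩, fun h => absurd h.1 (by linarith)⟩
    rw [hset, slice_volume (e := fun s => e (s - t))
      (he_meas.comp (measurable_id.sub measurable_const)) b measurableSet_Ioc]
    have hint : IntegrableOn (fun s => g (s - t)) (Ioc 0 t) volume :=
      hg_bdd t _ (by simp [Real.volume_Ioc])
    have hnn : 0 ≤ᵐ[volume.restrict (Ioc 0 t)] fun s => g (s - t) :=
      Filter.Eventually.of_forall (fun s => hg_nonneg _)
    have := ofReal_integral_eq_lintegral_ofReal hint hnn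
    rw [← this]
    congr 1
    rw [← intervalIntegral.integral_of_le ht, intervalIntegral.integral_comp_sub_right _ t]
    simp [hK_def]
  have hvol0 : volume (A 0) = ENNReal.ofReal (∫ u in Iic 0, g u) := by
    have hset : A 0 = {p : ℝ × ℝ | p.2 ∈ Iic 0 ∧ b ≤ p.1 ∧ p.1 < e p.2} := by
      rw [hA 0]
      ext ⟨x, s⟩
      simp only [mem_setOf_eq, mem_Iic, sub_zero]
      constructor
      · rintro ⟨h1, h2, h3⟩; exact ⟨h1, h2, by rwa [he_eq s h1]⟩
      · rintro ⟨h1, h2, h3⟩; exact ⟨h1, h2, by rwa [he_eq s h1] at h3⟩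
    rw [hset, slice_volume he_meas b measurableSet_Iic,
      ← ofReal_integral_eq_lintegral_ofReal hg_int0
        (Filter.Eventually.of_forall (fun s => hg_nonneg _))]
  -- K nonneg
  have hK_nonneg : ∀ t : ℝ, 0 ≤ t → 0 ≤ K t := by
    intro t ht
    exact intervalIntegral.integral_nonneg (by linarith) (fun u _ => hg_nonneg u)
  -- limit of K at infinity
  have hK_atTop : Tendsto K atTop (𝓝 (∫ u in Iic 0, g u)) := by
    have hU : (⋃ t : ℝ, Ioc (-t) 0) = Iic 0 := by
      ext u
      simp only [mem_iUnion, mem_Ioc, mem_Iic]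
      constructor
      · rintro ⟨t, _, h2⟩; exact h2
      · intro h; exact ⟨1 - u, by linarith, h⟩
    have hmain := tendsto_setIntegral_of_monotone (μ := volume) (f := g)
      (s := fun t : ℝ => Ioc (-t) 0) (fun t => measurableSet_Ioc)
      (fun t t' htt' => Ioc_subset_Ioc (by linarith) le_rfl)
      (by rw [hU]; exact hg_int0)
    rw [hU] at hmain
    refine hmain.congr' ?_
    filter_upwards [eventually_ge_atTop (0:ℝ)] with t ht
    rw [hK_def]
    exact (intervalIntegral.integral_of_le (by linarith)).symm
  intro l hl
  have hl' : (0:ℝ) < l := by exact_mod_cast Nat.lt_of_lt_of_le Nat.zero_lt_one hl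
  constructor
  · -- first limit
    have hintInt : IntervalIntegrable g volume 0 0 := by
      rw [intervalIntegrable_iff]
      have := hg_bdd 0 (Set.uIoc (0:ℝ) 0) (by simp [Real.volume_Ioc, uIoc])
      simpa using this
    have hF : HasDerivAt (fun a : ℝ => ∫ u in a..(0:ℝ), g u) (-(g 0)) (-(0:ℝ)) := by
      rw [neg_zero]
      exact intervalIntegral.integral_hasDerivAt_left hintInt
        ⟨univ, univ_mem, hg_meas.aestronglyMeasurable.restrict⟩ hg_cont
    have hneg : HasDerivAt (fun t : ℝ => -t) (-1 : ℝ) 0 := (hasDerivAt_id (0:ℝ)).neg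
    have hK_deriv : HasDerivAt K (g 0) 0 := by
      have := HasDerivAt.comp (0:ℝ) hF hneg
      simpa [hK_def, Function.comp_def] using this
    have hslope := hasDerivAt_iff_tendsto_slope.1 hK_deriv
    have hcomp : Tendsto (fun δ : ℝ => (l:ℝ) * δ) (nhdsWithin 0 (Ioi 0)) (𝓝[≠] (0:ℝ)) := by
      apply tendsto_nhdsWithin_of_tendsto_nhds_of_eventually_within
      · have h1 : Tendsto (fun δ : ℝ => (l:ℝ) * δ) (𝓝 0) (𝓝 ((l:ℝ) * 0)) :=
          (continuous_const.mul continuous_id).tendsto 0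
        simpa using h1.mono_left nhdsWithin_le_nhds
      · filter_upwards [self_mem_nhdsWithin] with δ hδ
        exact ne_of_gt (mul_pos hl' hδ)
    have hmain := (hslope.comp hcomp).const_mul (l:ℝ)
    have hlim_eq : (l:ℝ) * g 0 = (1 - b) * l := by rw [hg0]; ring
    rw [hlim_eq] at hmain
    refine hmain.congr' ?_
    filter_upwards [self_mem_nhdsWithin] with δ (hδ : δ ∈ Ioi 0)
    have hδ0 : (0:ℝ) < δ := hδ
    have hlδ : 0 ≤ (l:ℝ) * δ := le_of_lt (mul_pos hl' hδ0)
    have hK0 : K 0 = 0 := by simp [hK_def]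
    have : (l:ℝ) * slope K 0 ((l:ℝ) * δ) = K ((l:ℝ) * δ) / δ := by
      rw [slope_def_field, hK0]
      field_simp
      ring
    rw [Function.comp_apply, this, hvol _ hlδ,
      ENNReal.toReal_ofReal (hK_nonneg _ hlδ)]
  · -- second limit
    rw [hvol0]
    have hlδ_top : Tendsto (fun δ : ℝ => (l:ℝ) * δ) atTop atTop :=
      Tendsto.const_mul_atTop hl' tendsto_id
    have hmain := (ENNReal.continuous_ofReal.tendsto _).comp (hK_atTop.comp hlδ_top)
    refine hmain.congr' ?_
    filter_upwards [eventually_ge_atTop (0:ℝ)] with δ hδ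
    rw [Function.comp_apply, Function.comp_apply, hvol _ (mul_nonneg (le_of_lt hl') hδ)]
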